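/- Let n, d ≥ 1 be integers, α ∈ (0,2), γ ∈ (1,2), K ≥ 0, and let φ : ℝ^{nd} → ℝ be a function, writing points as x = (x_1, x_{2:n}) with x_1 ∈ ℝ^d and x_{2:n} = (x_2,…,x_n) ∈ ℝ^{(n−1)d}. Assume: (i) for every x ∈ ℝ^{nd} the partial gradient D_{x_1}φ(x) ∈ ℝ^d with respect to the first d-dimensional variable exists; (ii) for all x_1, x_1' ∈ ℝ^d and all z ∈ ℝ^{(n−1)d}, |D_{x_1}φ(x_1, z) − D_{x_1}φ(x_1', z)| ≤ K |x_1 − x_1'|^{γ−1}; (iii) for all x_1 ∈ ℝ^d and all z, z' ∈ ℝ^{(n−1)d}, |φ(x_1, z) − φ(x_1, z')| ≤ K Σ_{i=2}^n |(z − z')_i|^{γ/(1+α(i−1))}. Then there exists a constant C, depending only on γ, n and d, such that for all x, x' ∈ ℝ^{nd}: |D_{x_1}φ(x) − D_{x_1}φ(x')| ≤ C K d(x,x')^{γ−1}, where d(x,x') := Σ_{j=1}^n |(x−x')_j|^{1/(1+α(j−1))}. -/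

import Mathlib

open RealInnerProductSpace

lemma taylor_aux {d : ℕ} {K γ : ℝ} (hK : 0 ≤ K) (hγ1 : 1 < γ)
    (f : EuclideanSpace ℝ (Fin d) → ℝ)
    (g : EuclideanSpace ℝ (Fin d) → EuclideanSpace ℝ (Fin d))
    (hgrad : ∀ x, HasGradientAt f (g x) x)
    (hH : ∀ x y, ‖g x - g y‖ ≤ K * ‖x - y‖ ^ (γ - 1))
    (x₀ v : EuclideanSpace ℝ (Fin d)) (hv : ‖v‖ = 1) (h : ℝ) (hh : 0 ≤ h) :
    abs (f (x₀ + h • v) - f x₀ - h * ⟪g x₀, v⟫) ≤ K * h ^ (γ - 1) * h := by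
  set ψ : ℝ → ℝ := fun t => f (x₀ + t • v) - t * ⟪g x₀, v⟫ with hψ
  have hderiv : ∀ t ∈ Set.Icc (0:ℝ) h,
      HasDerivWithinAt ψ (⟪g (x₀ + t • v) - g x₀, v⟫) (Set.Icc 0 h) t := by
    intro t ht
    have hline : HasDerivAt (fun s : ℝ => x₀ + s • v) v t := by
      simpa using ((hasDerivAt_id t).smul_const v).const_add x₀
    have hf : HasDerivAt (fun s : ℝ => f (x₀ + s • v)) ⟪g (x₀ + t • v), v⟫ t := by
      have := (hgrad (x₀ + t • v)).hasFDerivAt.comp_hasDerivAt t hline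
      simpa [InnerProductSpace.toDual_apply_apply, Function.comp_def] using this
    have hψd : HasDerivAt ψ (⟪g (x₀ + t • v), v⟫ - ⟪g x₀, v⟫) t :=
      hf.sub (hasDerivAt_mul_const _)
    rw [← inner_sub_left] at hψd
    exact hψd.hasDerivWithinAt
  have hbound : ∀ t ∈ Set.Icc (0:ℝ) h, ‖⟪g (x₀ + t • v) - g x₀, v⟫‖ ≤ K * h ^ (γ - 1) := by
    intro t ht
    have h1 : abs (⟪g (x₀ + t • v) - g x₀, v⟫) ≤ ‖g (x₀ + t • v) - g x₀‖ * ‖v‖ :=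
      abs_real_inner_le_norm _ _
    rw [hv, mul_one] at h1
    have h2 : ‖g (x₀ + t • v) - g x₀‖ ≤ K * ‖t • v‖ ^ (γ - 1) := by
      simpa using hH (x₀ + t • v) x₀
    have h3 : ‖t • v‖ = t := by
      rw [norm_smul, hv, mul_one, Real.norm_eq_abs, abs_of_nonneg ht.1]
    rw [h3] at h2
    have h4 : t ^ (γ - 1) ≤ h ^ (γ - 1) :=
      Real.rpow_le_rpow ht.1 ht.2 (by linarith)
    calc ‖⟪g (x₀ + t • v) - g x₀, v⟫‖ ≤ ‖g (x₀ + t • v) - g x₀‖ := h1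
      _ ≤ K * t ^ (γ - 1) := h2
      _ ≤ K * h ^ (γ - 1) := by nlinarith [Real.rpow_nonneg ht.1 (γ-1)]
  have := (convex_Icc (0:ℝ) h).norm_image_sub_le_of_norm_hasDerivWithin_le
    hderiv hbound (Set.left_mem_Icc.2 hh) (Set.right_mem_Icc.2 hh)
  have hψ0 : ψ 0 = f x₀ := by simp [hψ]
  have hψh : ψ h = f (x₀ + h • v) - h * ⟪g x₀, v⟫ := rfl
  rw [hψh, hψ0, Real.norm_eq_abs, Real.norm_eq_abs, sub_zero, abs_of_nonneg hh] at this
  calc abs (f (x₀ + h • v) - f x₀ - h * ⟪g x₀, v⟫)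
      = abs (f (x₀ + h • v) - h * ⟪g x₀, v⟫ - f x₀) := by ring_nf
    _ ≤ K * h ^ (γ - 1) * h := this



/-- The `i`-th d-dimensional block of a point of `ℝ^{md}`, as a vector of the Euclidean
space `ℝ^d`. -/
noncomputable def blkOf (m d : ℕ) (z : Fin m × Fin d → ℝ) (i : Fin m) :
    EuclideanSpace ℝ (Fin d) :=
  (EuclideanSpace.equiv (Fin d) ℝ).symm (fun a => z (i, a))

/-- Reverse Taylor Expansion: if `φ(x₁, x_{2:n})` admits a gradient `g` in the first
(non-degenerate) variable `x₁ ∈ ℝ^d` which is `(γ-1)`-Hölder in `x₁` uniformly in the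
other variables, and `φ` is componentwise anisotropically Hölder in the degenerate variables
`x_{2:n} ∈ ℝ^{(n-1)d}` with exponents `γ/(1+α(i-1))`, then `g` is `(γ-1)`-Hölder for the full
anisotropic distance: `|g(x) - g(x')| ≤ C K d(x,x')^{γ-1}`, with `C = C(γ,n,d)`. -/
theorem reverse_taylor_expansion (n d : ℕ) (hn : 1 ≤ n) (hd : 1 ≤ d)
    (γ : ℝ) (hγ : γ ∈ Set.Ioo (1 : ℝ) 2) :
    ∃ C : ℝ, 0 < C ∧
      ∀ α K : ℝ, α ∈ Set.Ioo (0 : ℝ) 2 → 0 ≤ K →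
      ∀ (φ : EuclideanSpace ℝ (Fin d) → (Fin (n - 1) × Fin d → ℝ) → ℝ)
        (g : EuclideanSpace ℝ (Fin d) → (Fin (n - 1) × Fin d → ℝ) →
          EuclideanSpace ℝ (Fin d)),
        (∀ (x₁ : EuclideanSpace ℝ (Fin d)) (z : Fin (n - 1) × Fin d → ℝ),
          HasGradientAt (fun u => φ u z) (g x₁ z) x₁) →
        (∀ (x₁ x₁' : EuclideanSpace ℝ (Fin d)) (z : Fin (n - 1) × Fin d → ℝ),
          ‖g x₁ z - g x₁' z‖ ≤ K * ‖x₁ - x₁'‖ ^ (γ - 1)) →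
        (∀ (x₁ : EuclideanSpace ℝ (Fin d)) (z z' : Fin (n - 1) × Fin d → ℝ),
          |φ x₁ z - φ x₁ z'| ≤
            K * ∑ i : Fin (n - 1),
              ‖blkOf (n - 1) d (z - z') i‖ ^ (γ / (1 + α * ((i : ℕ) + 1)))) →
      ∀ (x₁ x₁' : EuclideanSpace ℝ (Fin d)) (z z' : Fin (n - 1) × Fin d → ℝ),
        ‖g x₁ z - g x₁' z'‖ ≤
          C * K * (‖x₁ - x₁'‖ + ∑ i : Fin (n - 1),
            ‖blkOf (n - 1) d (z - z') i‖ ^ (1 / (1 + α * ((i : ℕ) + 1)))) ^ (γ - 1) := by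
  obtain ⟨hγ1, hγ2⟩ := hγ
  refine ⟨5, by norm_num, ?_⟩
  intro α K hα hK φ g hgrad hH1 hH2 x₁ x₁' z z'
  obtain ⟨hα0, hα2⟩ := hα
  have he : ∀ i : Fin (n - 1), (0:ℝ) < 1 + α * ((i : ℕ) + 1) := by
    intro i; positivity
  set a : Fin (n - 1) → ℝ :=
    fun i => ‖blkOf (n - 1) d (z - z') i‖ ^ (1 / (1 + α * ((i : ℕ) + 1))) with ha
  have ha0 : ∀ i, 0 ≤ a i := fun i => Real.rpow_nonneg (norm_nonneg _) _
  set S2 : ℝ := ∑ i : Fin (n - 1), a i with hS2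
  have hS2nn : 0 ≤ S2 := Finset.sum_nonneg fun i _ => ha0 i
  set δ : ℝ := ‖x₁ - x₁'‖ + S2 with hδ
  have hδnn : 0 ≤ δ := add_nonneg (norm_nonneg _) hS2nn
  have hγ1' : (0:ℝ) < γ - 1 := by linarith
  rcases eq_or_lt_of_le hδnn with h0 | hδpos
  · -- degenerate case δ = 0
    have hx0 : ‖x₁ - x₁'‖ = 0 := by
      have := norm_nonneg (x₁ - x₁'); linarith [hS2nn, h0.symm]
    have hS20 : S2 = 0 := by
      have := norm_nonneg (x₁ - x₁'); linarith [h0.symm]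
    have hxeq : x₁ = x₁' := by
      have := norm_eq_zero.mp hx0; exact sub_eq_zero.mp this
    have hsum0 : ∑ i : Fin (n - 1), a i = 0 := hS2.symm.trans hS20
    have hai0 : ∀ i ∈ (Finset.univ : Finset (Fin (n - 1))), a i = 0 :=
      (Finset.sum_eq_zero_iff_of_nonneg (fun i _ => ha0 i)).mp hsum0
    have hzeq : z = z' := by
      funext p
      have hblk : ‖blkOf (n - 1) d (z - z') p.1‖ = 0 := by
        have h1 := hai0 p.1 (Finset.mem_univ _)
        rw [ha] at h1
        have hne : 1 / (1 + α * ((p.1 : ℕ) + 1)) ≠ 0 :=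
          one_div_ne_zero (ne_of_gt (he p.1))
        exact (Real.rpow_eq_zero (norm_nonneg _) hne).mp h1
      have hblk0 : blkOf (n - 1) d (z - z') p.1 = 0 := norm_eq_zero.mp hblk
      have h2 : (fun a => (z - z') (p.1, a)) = (0 : Fin d → ℝ) := by
        have := congrArg (EuclideanSpace.equiv (Fin d) ℝ) hblk0
        simpa [blkOf] using this
      have h3 : (z - z') (p.1, p.2) = 0 := congrFun h2 p.2
      have h4 : z p - z' p = 0 := by simpa using h3
      linarith
    rw [← h0, Real.zero_rpow (ne_of_gt hγ1'), mul_zero]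
    simp [hxeq, hzeq]
  · -- main case
    have hδγ : (0:ℝ) < δ ^ (γ - 1) := Real.rpow_pos_of_pos hδpos _
    -- Step 1: variation in x₁
    have step1 : ‖g x₁ z - g x₁' z‖ ≤ K * δ ^ (γ - 1) := by
      have h1 := hH1 x₁ x₁' z
      have h2 : ‖x₁ - x₁'‖ ^ (γ - 1) ≤ δ ^ (γ - 1) :=
        Real.rpow_le_rpow (norm_nonneg _) (le_add_of_nonneg_right hS2nn) (le_of_lt hγ1')
      calc ‖g x₁ z - g x₁' z‖ ≤ K * ‖x₁ - x₁'‖ ^ (γ - 1) := h1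
        _ ≤ K * δ ^ (γ - 1) := mul_le_mul_of_nonneg_left h2 hK
    -- anisotropic sum bound
    have hΔ : (∑ i : Fin (n - 1),
        ‖blkOf (n - 1) d (z - z') i‖ ^ (γ / (1 + α * ((i : ℕ) + 1))))
        ≤ δ ^ (γ - 1) * δ := by
      have hterm : ∀ i ∈ (Finset.univ : Finset (Fin (n - 1))),
          ‖blkOf (n - 1) d (z - z') i‖ ^ (γ / (1 + α * ((i : ℕ) + 1)))
            ≤ a i * δ ^ (γ - 1) := by
        intro i _
        have h1 : ‖blkOf (n - 1) d (z - z') i‖ ^ (γ / (1 + α * ((i : ℕ) + 1)))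
            = (a i) ^ γ := by
          rw [ha]
          simp only
          rw [show γ / (1 + α * ((i : ℕ) + 1))
              = (1 / (1 + α * ((i : ℕ) + 1))) * γ by ring,
            Real.rpow_mul (norm_nonneg _)]
        rw [h1]
        have haiδ : a i ≤ δ := by
          have h2 : a i ≤ ∑ j : Fin (n - 1), a j :=
            Finset.single_le_sum (fun j _ => ha0 j) (Finset.mem_univ i)
          rw [← hS2] at h2
          exact le_trans h2 (le_add_of_nonneg_left (norm_nonneg _))
        have h3 : (a i) ^ γ = (a i) ^ (1:ℝ) * (a i) ^ (γ - 1) := by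
          rw [← Real.rpow_add' (ha0 i) (by intro hc; simp at hc; linarith)]
          norm_num
        rw [h3, Real.rpow_one]
        exact mul_le_mul_of_nonneg_left
          (Real.rpow_le_rpow (ha0 i) haiδ (le_of_lt hγ1')) (ha0 i)
      calc (∑ i : Fin (n - 1),
            ‖blkOf (n - 1) d (z - z') i‖ ^ (γ / (1 + α * ((i : ℕ) + 1))))
          ≤ ∑ i : Fin (n - 1), a i * δ ^ (γ - 1) := Finset.sum_le_sum hterm
        _ = S2 * δ ^ (γ - 1) := by rw [← Finset.sum_mul, ← hS2]
        _ ≤ δ * δ ^ (γ - 1) :=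
            mul_le_mul_of_nonneg_right (le_add_of_nonneg_left (norm_nonneg _)) (le_of_lt hδγ)
        _ = δ ^ (γ - 1) * δ := mul_comm _ _
    -- Step 2: variation in z
    have step2 : ‖g x₁' z - g x₁' z'‖ ≤ 4 * K * δ ^ (γ - 1) := by
      by_cases hw : g x₁' z = g x₁' z'
      · rw [hw, sub_self, norm_zero]; positivity
      · have hwne : g x₁' z - g x₁' z' ≠ 0 := sub_ne_zero.mpr hw
        set w : EuclideanSpace ℝ (Fin d) := g x₁' z - g x₁' z' with hwdef
        set v : EuclideanSpace ℝ (Fin d) := ‖w‖⁻¹ • w with hvdef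
        have hv : ‖v‖ = 1 := norm_smul_inv_norm hwne
        have hwpos : (0:ℝ) < ‖w‖ := norm_pos_iff.mpr hwne
        have hinner : ⟪w, v⟫ = ‖w‖ := by
          rw [hvdef, real_inner_smul_right, real_inner_self_eq_norm_sq]
          field_simp
        have T : ∀ zz : Fin (n - 1) × Fin d → ℝ,
            abs (φ (x₁' + δ • v) zz - φ x₁' zz - δ * ⟪g x₁' zz, v⟫)
              ≤ K * δ ^ (γ - 1) * δ :=
          fun zz => taylor_aux hK hγ1 (fun u => φ u zz) (fun u => g u zz)
            (fun x => hgrad x zz) (fun x y => hH1 x y zz) x₁' v hv δ hδnn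
        have TZ := T z
        have TZ' := T z'
        have D1 : |φ (x₁' + δ • v) z - φ (x₁' + δ • v) z'| ≤ K * (δ ^ (γ - 1) * δ) :=
          le_trans (hH2 (x₁' + δ • v) z z') (mul_le_mul_of_nonneg_left hΔ hK)
        have D2 : |φ x₁' z - φ x₁' z'| ≤ K * (δ ^ (γ - 1) * δ) :=
          le_trans (hH2 x₁' z z') (mul_le_mul_of_nonneg_left hΔ hK)
        have hweq : ‖w‖ = ⟪g x₁' z, v⟫ - ⟪g x₁' z', v⟫ := by
          rw [← inner_sub_left, ← hwdef, hinner]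
        have key : δ * ‖w‖ ≤ δ * (4 * K * δ ^ (γ - 1)) := by
          rw [hweq]
          rw [abs_le] at TZ TZ' D1 D2
          nlinarith [TZ.1, TZ.2, TZ'.1, TZ'.2, D1.1, D1.2, D2.1, D2.2]
        have := le_of_mul_le_mul_left key hδpos
        rwa [hwdef] at this
    calc ‖g x₁ z - g x₁' z'‖
        ≤ ‖g x₁ z - g x₁' z‖ + ‖g x₁' z - g x₁' z'‖ := by
          have := dist_triangle (g x₁ z) (g x₁' z) (g x₁' z')
          simpa [dist_eq_norm] using this
      _ ≤ K * δ ^ (γ - 1) + 4 * K * δ ^ (γ - 1) := add_le_add step1 step2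
      _ = 5 * K * δ ^ (γ - 1) := by ring
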